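/- Let x be a nonzero vector with ρ := f(x) satisfying λ₁ ≤ ρ < (λ₁+λ₂)/2, and set r = Ax − ρMx. Then (rᵀA⁻¹r)/(xᵀMx) ≤ ρ(ρ−λ₁)/λ₁. -/

import Mathlib

open Matrix

lemma aux_pointwise (l l1 ρ : ℝ) (h1 : 0 < l1) (h2 : l1 ≤ l) (h3 : 0 < ρ) :
    (l - ρ)^2 / l ≤ ρ * (ρ - l1) / l1 + (l - ρ) := by
  have hl : 0 < l := lt_of_lt_of_le h1 h2
  rw [div_add' _ _ _ h1.ne', div_le_div_iff₀ hl h1]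
  nlinarith [mul_pos h3 h3, mul_nonneg (mul_nonneg h3.le h3.le) (sub_nonneg.mpr h2)]

/-- Residual bound in the A⁻¹-norm. -/
theorem statement_5 {n : ℕ}
    (A M : Matrix (Fin (n+2)) (Fin (n+2)) ℝ)
    (hA : A.PosDef) (hM : M.PosDef)
    (lam : Fin (n+2) → ℝ) (u : Fin (n+2) → (Fin (n+2) → ℝ))
    (hlam_pos : 0 < lam 0) (hgap : lam 0 < lam 1) (hmono : Monotone lam)
    (heig : ∀ i, A *ᵥ u i = lam i • (M *ᵥ u i))
    (horth : ∀ i j, u i ⬝ᵥ M *ᵥ u j = if i = j then 1 else 0)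
    (x : Fin (n+2) → ℝ) (hx : x ≠ 0)
    (ρ : ℝ) (hρdef : ρ = (x ⬝ᵥ A *ᵥ x) / (x ⬝ᵥ M *ᵥ x))
    (hρ1 : lam 0 ≤ ρ) (hρ2 : ρ < (lam 0 + lam 1) / 2)
    (r : Fin (n+2) → ℝ) (hr : r = A *ᵥ x - ρ • (M *ᵥ x)) :
    (r ⬝ᵥ A⁻¹ *ᵥ r) / (x ⬝ᵥ M *ᵥ x) ≤ ρ * (ρ - lam 0) / lam 0 := by
  classical
  have hlam : ∀ i, 0 < lam i := fun i => lt_of_lt_of_le hlam_pos (hmono (Fin.zero_le i))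
  have hρpos : 0 < ρ := lt_of_lt_of_le hlam_pos hρ1
  have hm0 : 0 < x ⬝ᵥ M *ᵥ x := by simpa using hM.dotProduct_mulVec_pos hx
  have hMsymm : Mᵀ = M := hM.1
  -- matrix of eigenvectors and diagonal matrices
  set U : Matrix (Fin (n+2)) (Fin (n+2)) ℝ := Matrix.of (fun i j => u j i) with hU
  set D : Matrix (Fin (n+2)) (Fin (n+2)) ℝ := diagonal lam with hD
  set Di : Matrix (Fin (n+2)) (Fin (n+2)) ℝ := diagonal (fun i => (lam i)⁻¹) with hDi
  set Dd : Matrix (Fin (n+2)) (Fin (n+2)) ℝ := diagonal (fun i => lam i - ρ) with hDd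
  have hMU : ∀ j k, (M * U) k j = (M *ᵥ u j) k := by
    intro j k
    simp [hU, Matrix.mul_apply, Matrix.mulVec, dotProduct]
  have hUMU : Uᵀ * M * U = 1 := by
    ext i j
    rw [Matrix.mul_assoc, Matrix.mul_apply]
    have h1 : ∑ k, Uᵀ i k * (M * U) k j = u i ⬝ᵥ M *ᵥ u j := by
      simp only [dotProduct, hMU]
      rfl
    rw [h1, horth i j]
    simp [Matrix.one_apply]
  have hAU : A * U = M * U * D := by
    ext k j
    rw [Matrix.mul_diagonal, hMU]
    have h1 : (A * U) k j = (A *ᵥ u j) k := by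
      simp [hU, Matrix.mul_apply, Matrix.mulVec, dotProduct]
    rw [h1, heig j]
    simp [mul_comm]
  have hUV : U * (Uᵀ * M) = 1 := mul_eq_one_comm.mpr hUMU
  obtain ⟨c, hc⟩ : ∃ c : Fin (n+2) → ℝ, c = (Uᵀ * M) *ᵥ x := ⟨_, rfl⟩
  have hxc : x = U *ᵥ c := by
    rw [hc, Matrix.mulVec_mulVec, hUV, Matrix.one_mulVec]
  -- general dot product manipulation
  have gen : ∀ (N : Matrix (Fin (n+2)) (Fin (n+2)) ℝ) (a b : Fin (n+2) → ℝ),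
      (N *ᵥ a) ⬝ᵥ b = a ⬝ᵥ (Nᵀ *ᵥ b) := by
    intro N a b
    rw [← Matrix.vecMul_transpose, dotProduct_mulVec]
  -- quadratic forms in terms of c
  have hSm : x ⬝ᵥ M *ᵥ x = c ⬝ᵥ c :=
    calc x ⬝ᵥ M *ᵥ x = (U *ᵥ c) ⬝ᵥ (M *ᵥ (U *ᵥ c)) := by rw [← hxc]
    _ = c ⬝ᵥ (Uᵀ *ᵥ (M *ᵥ (U *ᵥ c))) := gen _ _ _
    _ = c ⬝ᵥ (Uᵀ *ᵥ ((M * U) *ᵥ c)) := by rw [Matrix.mulVec_mulVec c M U]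
    _ = c ⬝ᵥ ((Uᵀ * (M * U)) *ᵥ c) := by rw [Matrix.mulVec_mulVec c Uᵀ (M * U)]
    _ = c ⬝ᵥ c := by rw [← Matrix.mul_assoc, hUMU, Matrix.one_mulVec]
  have hSa : x ⬝ᵥ A *ᵥ x = c ⬝ᵥ D *ᵥ c :=
    calc x ⬝ᵥ A *ᵥ x = (U *ᵥ c) ⬝ᵥ (A *ᵥ (U *ᵥ c)) := by rw [← hxc]
    _ = c ⬝ᵥ (Uᵀ *ᵥ (A *ᵥ (U *ᵥ c))) := gen _ _ _
    _ = c ⬝ᵥ (Uᵀ *ᵥ ((A * U) *ᵥ c)) := by rw [Matrix.mulVec_mulVec c A U]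
    _ = c ⬝ᵥ ((Uᵀ * (A * U)) *ᵥ c) := by rw [Matrix.mulVec_mulVec c Uᵀ (A * U)]
    _ = c ⬝ᵥ D *ᵥ c := by
        rw [hAU, ← Matrix.mul_assoc, ← Matrix.mul_assoc, hUMU, Matrix.one_mul]
  -- residual in terms of c
  have hdc : Dd *ᵥ c = D *ᵥ c - ρ • c := by
    funext i
    simp only [hDd, hD, Matrix.mulVec_diagonal, Pi.sub_apply, Pi.smul_apply, smul_eq_mul]
    ring
  have hAx : A *ᵥ x = (M * U) *ᵥ (D *ᵥ c) := by
    rw [hxc, Matrix.mulVec_mulVec c A U, hAU, ← Matrix.mulVec_mulVec]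
  have hMx : M *ᵥ x = (M * U) *ᵥ c := by
    rw [hxc, Matrix.mulVec_mulVec c M U]
  have hr' : r = (M * U) *ᵥ (Dd *ᵥ c) := by
    rw [hr, hAx, hMx, hdc, Matrix.mulVec_sub, Matrix.mulVec_smul]
  -- inverse relation
  have hDDi : D * Di = 1 := by
    rw [hD, hDi, Matrix.diagonal_mul_diagonal]
    have h1 : (fun i => lam i * (lam i)⁻¹) = fun _ : Fin (n+2) => (1:ℝ) :=
      funext fun i => mul_inv_cancel₀ (hlam i).ne'
    rw [h1, Matrix.diagonal_one]
  have hAdet : IsUnit A.det := isUnit_iff_ne_zero.mpr hA.det_pos.ne'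
  have hAinvMU : A⁻¹ * (M * U) = U * Di := by
    have h1 : A * (U * Di) = M * U := by
      rw [← Matrix.mul_assoc, hAU, Matrix.mul_assoc, hDDi, Matrix.mul_one]
    rw [← h1, ← Matrix.mul_assoc, Matrix.nonsing_inv_mul A hAdet, Matrix.one_mul]
  have h2 : A⁻¹ *ᵥ r = U *ᵥ (Di *ᵥ (Dd *ᵥ c)) := by
    rw [hr']
    calc A⁻¹ *ᵥ ((M * U) *ᵥ (Dd *ᵥ c))
        = (A⁻¹ * (M * U)) *ᵥ (Dd *ᵥ c) := Matrix.mulVec_mulVec _ _ _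
    _ = (U * Di) *ᵥ (Dd *ᵥ c) := by rw [hAinvMU]
    _ = U *ᵥ (Di *ᵥ (Dd *ᵥ c)) := (Matrix.mulVec_mulVec _ _ _).symm
  -- the A⁻¹-norm of the residual
  have hrar : r ⬝ᵥ A⁻¹ *ᵥ r = ∑ i, (lam i - ρ)^2 / lam i * (c i)^2 :=
    calc r ⬝ᵥ A⁻¹ *ᵥ r
        = ((M * U) *ᵥ (Dd *ᵥ c)) ⬝ᵥ (U *ᵥ (Di *ᵥ (Dd *ᵥ c))) := by rw [h2, hr']
    _ = (Dd *ᵥ c) ⬝ᵥ ((M * U)ᵀ *ᵥ (U *ᵥ (Di *ᵥ (Dd *ᵥ c)))) := gen _ _ _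
    _ = (Dd *ᵥ c) ⬝ᵥ (((M * U)ᵀ * U) *ᵥ (Di *ᵥ (Dd *ᵥ c))) := by
        rw [Matrix.mulVec_mulVec (Di *ᵥ (Dd *ᵥ c)) (M * U)ᵀ U]
    _ = (Dd *ᵥ c) ⬝ᵥ (Di *ᵥ (Dd *ᵥ c)) := by
        rw [Matrix.transpose_mul, hMsymm, hUMU, Matrix.one_mulVec]
    _ = ∑ i, (lam i - ρ)^2 / lam i * (c i)^2 := by
        rw [dotProduct]
        apply Finset.sum_congr rfl
        intro i _
        have hne := (hlam i).ne'
        simp only [hDd, hDi, Matrix.mulVec_diagonal]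
        field_simp
  -- the numerator relation from the definition of ρ
  have ha_eq : x ⬝ᵥ A *ᵥ x = ρ * (x ⬝ᵥ M *ᵥ x) := by
    rw [hρdef]
    field_simp
  have hSm' : x ⬝ᵥ M *ᵥ x = ∑ i, (c i)^2 := by
    rw [hSm, dotProduct]
    apply Finset.sum_congr rfl
    intro i _
    ring
  have hSa' : x ⬝ᵥ A *ᵥ x = ∑ i, lam i * (c i)^2 := by
    rw [hSa, dotProduct]
    apply Finset.sum_congr rfl
    intro i _
    rw [hD, Matrix.mulVec_diagonal]
    ring
  -- final estimate
  rw [div_le_iff₀ hm0, hrar]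
  have step1 : ∑ i, (lam i - ρ)^2 / lam i * (c i)^2
      ≤ ∑ i, (ρ * (ρ - lam 0) / lam 0 + (lam i - ρ)) * (c i)^2 := by
    apply Finset.sum_le_sum
    intro i _
    exact mul_le_mul_of_nonneg_right
      (aux_pointwise (lam i) (lam 0) ρ hlam_pos (hmono (Fin.zero_le i)) hρpos)
      (sq_nonneg _)
  have step2 : ∑ i, (ρ * (ρ - lam 0) / lam 0 + (lam i - ρ)) * (c i)^2
      = ρ * (ρ - lam 0) / lam 0 * (x ⬝ᵥ M *ᵥ x)
        + ((x ⬝ᵥ A *ᵥ x) - ρ * (x ⬝ᵥ M *ᵥ x)) := by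
    rw [hSm', hSa', Finset.mul_sum, Finset.mul_sum, ← Finset.sum_sub_distrib,
      ← Finset.sum_add_distrib]
    apply Finset.sum_congr rfl
    intro i _
    ring
  calc ∑ i, (lam i - ρ)^2 / lam i * (c i)^2
      ≤ ρ * (ρ - lam 0) / lam 0 * (x ⬝ᵥ M *ᵥ x)
        + ((x ⬝ᵥ A *ᵥ x) - ρ * (x ⬝ᵥ M *ᵥ x)) := step1.trans_eq step2
    _ = ρ * (ρ - lam 0) / lam 0 * (x ⬝ᵥ M *ᵥ x) := by rw [ha_eq]; ring
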